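/- Let X be an ultradiscrete ballean and n ≥ 2 a natural number. Then the n-th power X^n of X is not normal, but the hypersymmetric n-th power [X]^{≤n} of X is normal. -/

import Mathlib

universe u v

open Set

/-- A ballean: a set `X` with a family of entourages satisfying the three axioms. -/
structure Ballean (X : Type u) : Type u where
  entourages : Set (Set (X × X))
  diag_mem : ∀ E ∈ entourages, ∀ x : X, (x, x) ∈ E
  comp_inv_sub : ∀ E ∈ entourages, ∀ F ∈ entourages, ∃ D ∈ entourages,
      {p : X × X | ∃ y : X, (p.1, y) ∈ E ∧ (p.2, y) ∈ F} ⊆ D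
  sUnion_eq_univ : ⋃₀ entourages = Set.univ

namespace Ballean

variable {X : Type u}

/-- The ball `E[x]` of radius `E` centered at `x`. -/
def ball (E : Set (X × X)) (x : X) : Set X := {y | (x, y) ∈ E}

/-- The `E`-neighborhood `E[A]` of a set `A`. -/
def img (E : Set (X × X)) (A : Set X) : Set X := {y | ∃ a ∈ A, (a, y) ∈ E}

/-- A subset is bounded if it is contained in some ball. -/
def IsBounded (B : Ballean X) (S : Set X) : Prop :=
  ∃ E ∈ B.entourages, ∃ x : X, S ⊆ ball E x

def Unbounded (B : Ballean X) : Prop := ¬ B.IsBounded Set.univ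

/-- Two sets are asymptotically disjoint if `E[A] ∩ E[C]` is bounded for all entourages. -/
def AsympDisjoint (B : Ballean X) (A C : Set X) : Prop :=
  ∀ E ∈ B.entourages, B.IsBounded (img E A ∩ img E C)

/-- `U` is an asymptotic neighborhood of `A` if `E[A] \ U` is bounded for all entourages. -/
def AsympNbhd (B : Ballean X) (A U : Set X) : Prop :=
  ∀ E ∈ B.entourages, B.IsBounded (img E A \ U)

/-- A ballean is normal if asymptotically disjoint sets have disjoint asymptotic
neighborhoods. -/
def Normal (B : Ballean X) : Prop :=
  ∀ A C : Set X, B.AsympDisjoint A C →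
    ∃ U V : Set X, B.AsympNbhd A U ∧ B.AsympNbhd C V ∧ Disjoint U V

/-- A ballean is ultranormal if it contains no two unbounded asymptotically disjoint sets. -/
def Ultranormal (B : Ballean X) : Prop :=
  ∀ A C : Set X, B.AsympDisjoint A C → B.IsBounded A ∨ B.IsBounded C

/-- A ballean is discrete if it is unbounded and every entourage acts trivially
outside a bounded set. -/
def Discrete (B : Ballean X) : Prop :=
  B.Unbounded ∧ ∀ E ∈ B.entourages, ∃ S : Set X, B.IsBounded S ∧
    ∀ x ∉ S, ball E x = {x}

/-- A ballean has bounded growth if there is a growth entourage `G`. -/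
def BoundedGrowth (B : Ballean X) : Prop :=
  ∃ G : Set (X × X),
    (∀ S : Set X, B.IsBounded S → B.IsBounded (img G S)) ∧
    (∀ E ∈ B.entourages, ∃ S : Set X, B.IsBounded S ∧ ∀ x ∉ S, ball E x ⊆ ball G x)

/-- The bornology of a ballean has a linearly ordered base. -/
def HasLinearBornBase (B : Ballean X) : Prop :=
  ∃ 𝒞 : Set (Set X), (∀ C ∈ 𝒞, B.IsBounded C) ∧
    (∀ C ∈ 𝒞, ∀ D ∈ 𝒞, C ⊆ D ∨ D ⊆ C) ∧
    ∀ S : Set X, B.IsBounded S → ∃ C ∈ 𝒞, S ⊆ C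

/-- The additivity of the bornology: the smallest cardinality of a family of bounded
sets with no bounded upper bound. -/
noncomputable def addBorn (B : Ballean X) : Cardinal.{u} :=
  sInf {c | ∃ 𝒜 : Set (Set X), (∀ A ∈ 𝒜, B.IsBounded A) ∧
    (¬ ∃ D : Set X, B.IsBounded D ∧ ∀ A ∈ 𝒜, A ⊆ D) ∧ c = Cardinal.mk ↥𝒜}

/-- The cofinality of the bornology: the smallest cardinality of a base of the bornology. -/
noncomputable def cofBorn (B : Ballean X) : Cardinal.{u} :=
  sInf {c | ∃ 𝒞 : Set (Set X), (∀ C ∈ 𝒞, B.IsBounded C) ∧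
    (∀ S : Set X, B.IsBounded S → ∃ C ∈ 𝒞, S ⊆ C) ∧ c = Cardinal.mk ↥𝒞}

/-- The cofinality of the family of entourages. -/
noncomputable def cofEnt (B : Ballean X) : Cardinal.{u} :=
  sInf {c | ∃ 𝒞 : Set (Set (X × X)), 𝒞 ⊆ B.entourages ∧
    (∀ E ∈ B.entourages, ∃ C ∈ 𝒞, E ⊆ C) ∧ c = Cardinal.mk ↥𝒞}

/-- A ballean is `cof`-regular if `cof(𝓔) = cof(B_X)`. -/
def CofRegular (B : Ballean X) : Prop := B.cofEnt = B.cofBorn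

end Ballean

/-- The entourages of the product of two balleans. -/
def prodEnt {X Y : Type u} (BX : Ballean X) (BY : Ballean Y) :
    Set (Set ((X × Y) × (X × Y))) :=
  {E | ∃ EX ∈ BX.entourages, ∃ EY ∈ BY.entourages,
    E = {p | (p.1.1, p.2.1) ∈ EX ∧ (p.1.2, p.2.2) ∈ EY}}

/-- The entourages of the box-product of a family of balleans. -/
def boxEnt {I : Type v} {X : I → Type u} (B : ∀ i, Ballean (X i)) :
    Set (Set ((∀ i, X i) × (∀ i, X i))) :=
  {E | ∃ F : ∀ i, Set (X i × X i), (∀ i, F i ∈ (B i).entourages) ∧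
    E = {p | ∀ i, (p.1 i, p.2 i) ∈ F i}}

/-- The entourages of the `n`-th power of a ballean. -/
def powEnt {X : Type u} (B : Ballean X) (n : ℕ) :
    Set (Set ((Fin n → X) × (Fin n → X))) :=
  {E | ∃ F : Fin n → Set (X × X), (∀ i, F i ∈ B.entourages) ∧
    E = {p | ∀ i, (p.1 i, p.2 i) ∈ F i}}

/-- The underlying set of the hypersymmetric `n`-th power: nonempty subsets of `X` of
cardinality at most `n`. -/
def HyperLE (X : Type u) (n : ℕ) : Type u :=
  {A : Set X // A.Nonempty ∧ Cardinal.mk ↥A ≤ (n : Cardinal.{u})}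

/-- The entourages of the hypersymmetric `n`-th power `[X]^{≤n}`. -/
def hyperEnt {X : Type u} (B : Ballean X) (n : ℕ) :
    Set (Set (HyperLE X n × HyperLE X n)) :=
  {Eh | ∃ E ∈ B.entourages,
    Eh = {p | p.1.1 ⊆ Ballean.img E p.2.1 ∧ p.2.1 ⊆ Ballean.img E p.1.1}}

section Part0

open Ballean

variable {X : Type u} {B : Ballean X}

/-- From discreteness and ultranormality we get an entourage and a point. -/
lemma exists_ent_pt (hdis : B.Discrete) (hun : B.Ultranormal) :
    ∃ E₀ ∈ B.entourages, ∃ _x₀ : X, True := by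
  by_cases h : B.entourages.Nonempty
  · obtain ⟨E, hE⟩ := h
    obtain ⟨S, hS, -⟩ := hdis.2 E hE
    obtain ⟨E₀, hE₀, x₀, -⟩ := hS
    exact ⟨E₀, hE₀, x₀, trivial⟩
  · have had : B.AsympDisjoint ∅ ∅ := by
      intro E hE; exact absurd ⟨E, hE⟩ h
    rcases hun ∅ ∅ had with hb | hb <;>
      · obtain ⟨E₀, hE₀, x₀, -⟩ := hb
        exact ⟨E₀, hE₀, x₀, trivial⟩

lemma inv_mem (hE₀ : E₀ ∈ B.entourages) (hF : F ∈ B.entourages) :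
    ∃ D ∈ B.entourages, ∀ a b : X, (a, b) ∈ F → (b, a) ∈ D := by
  obtain ⟨D, hD, hsub⟩ := B.comp_inv_sub E₀ hE₀ F hF
  exact ⟨D, hD, fun a b hab => hsub ⟨b, B.diag_mem E₀ hE₀ b, hab⟩⟩

lemma comp_mem (hF : F ∈ B.entourages) (hE : E ∈ B.entourages) :
    ∃ D ∈ B.entourages, ∀ x s z : X, (x, s) ∈ F → (s, z) ∈ E → (x, z) ∈ D := by
  obtain ⟨D1, hD1, h1⟩ := inv_mem hF hE
  obtain ⟨D, hD, hsub⟩ := B.comp_inv_sub F hF D1 hD1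
  exact ⟨D, hD, fun x s z hxs hsz => hsub ⟨s, hxs, h1 s z hsz⟩⟩

lemma two_mem (hE : E ∈ B.entourages) (hF : F ∈ B.entourages) :
    ∃ D ∈ B.entourages, E ⊆ D ∧ F ⊆ D := by
  obtain ⟨D1, hD1, h1⟩ := inv_mem hE hF
  obtain ⟨D, hD, hsub⟩ := B.comp_inv_sub E hE D1 hD1
  refine ⟨D, hD, ?_, ?_⟩
  · rintro ⟨a, b⟩ hab; exact hsub ⟨b, hab, B.diag_mem _ hD1 b⟩
  · rintro ⟨a, b⟩ hab; exact hsub ⟨a, B.diag_mem _ hE a, h1 a b hab⟩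

lemma bounded_mono {S T : Set X} (hST : S ⊆ T) (hT : B.IsBounded T) : B.IsBounded S := by
  obtain ⟨E, hE, x, hx⟩ := hT
  exact ⟨E, hE, x, hST.trans hx⟩

lemma bounded_singleton (hE₀ : E₀ ∈ B.entourages) (x : X) : B.IsBounded {x} := by
  refine ⟨E₀, hE₀, x, ?_⟩
  rintro y hy
  rw [Set.mem_singleton_iff] at hy
  subst hy
  exact B.diag_mem E₀ hE₀ y

lemma bounded_empty (hE₀ : E₀ ∈ B.entourages) (x₀ : X) : B.IsBounded (∅ : Set X) :=
  bounded_mono (Set.empty_subset _) (bounded_singleton hE₀ x₀)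

lemma bounded_union {S T : Set X} (hS : B.IsBounded S) (hT : B.IsBounded T) :
    B.IsBounded (S ∪ T) := by
  obtain ⟨E, hE, x, hx⟩ := hS
  obtain ⟨F, hF, y, hy⟩ := hT
  have hxy : ((x, y) : X × X) ∈ ⋃₀ B.entourages := by
    rw [B.sUnion_eq_univ]; trivial
  obtain ⟨G, hG, hxyG⟩ := hxy
  obtain ⟨D2, hD2, hcomp⟩ := comp_mem hG hF
  obtain ⟨D, hD, hED, hD2D⟩ := two_mem hE hD2
  refine ⟨D, hD, x, ?_⟩
  rintro z (hz | hz)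
  · exact hED (hx hz)
  · exact hD2D (hcomp x y z hxyG (hy hz))

lemma bounded_insert {S : Set X} (a : X) (hS : B.IsBounded S) (hE₀ : E₀ ∈ B.entourages) :
    B.IsBounded (insert a S) := by
  rw [Set.insert_eq]
  exact bounded_union (bounded_singleton hE₀ a) hS

lemma bounded_img (hE : E ∈ B.entourages) {S : Set X} (hS : B.IsBounded S) :
    B.IsBounded (Ballean.img E S) := by
  obtain ⟨F, hF, x, hx⟩ := hS
  obtain ⟨D, hD, hcomp⟩ := comp_mem hF hE
  refine ⟨D, hD, x, ?_⟩
  rintro z ⟨a, ha, haz⟩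
  exact hcomp x a z (hx ha) haz

lemma bounded_finite (hE₀ : E₀ ∈ B.entourages) (x₀ : X) {S : Set X} (hS : S.Finite) :
    B.IsBounded S := by
  refine Set.Finite.induction_on (motive := fun s _ => B.IsBounded s) S hS (bounded_empty hE₀ x₀) ?_
  intro a s _ _ ih
  exact bounded_insert a ih hE₀

/-- For every bounded set `T` there is an entourage containing `T × T` (and the diagonal). -/
lemma exists_square {T : Set X} (hT : B.IsBounded T) :
    ∃ D ∈ B.entourages, ∀ a ∈ T, ∀ b ∈ T, (a, b) ∈ D := by
  obtain ⟨F, hF, x, hx⟩ := hT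
  obtain ⟨D1, hD1, h1⟩ := inv_mem hF hF
  obtain ⟨D, hD, hsub⟩ := B.comp_inv_sub D1 hD1 D1 hD1
  exact ⟨D, hD, fun a ha b hb => hsub ⟨x, h1 x a (hx ha), h1 x b (hx hb)⟩⟩

/-- Maximality of the bornology of an ultradiscrete ballean. -/
lemma bounded_or (hdis : B.Discrete) (hun : B.Ultranormal) (S : Set X) :
    B.IsBounded S ∨ B.IsBounded Sᶜ := by
  apply hun S Sᶜ
  intro E hE
  obtain ⟨W, hW, hball⟩ := hdis.2 E hE
  have hsub : Ballean.img E S ∩ Ballean.img E Sᶜ ⊆ Ballean.img E W := by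
    rintro z ⟨⟨a, ha, haz⟩, ⟨b, hb, hbz⟩⟩
    by_cases haW : a ∈ W
    · exact ⟨a, haW, haz⟩
    · by_cases hbW : b ∈ W
      · exact ⟨b, hbW, hbz⟩
      · exfalso
        have hza : z ∈ Ballean.ball E a := haz
        rw [hball a haW] at hza
        have hzb : z ∈ Ballean.ball E b := hbz
        rw [hball b hbW] at hzb
        rw [Set.mem_singleton_iff] at hza hzb
        apply hb
        rw [← hzb, hza]
        exact ha
  exact bounded_mono hsub (bounded_img hE hW)

lemma exists_two_ne (hdis : B.Discrete) (hE₀ : E₀ ∈ B.entourages) (x₀ : X) :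
    ∃ y₀ y₁ : X, y₀ ≠ y₁ := by
  by_contra h
  push_neg at h
  apply hdis.1
  refine ⟨E₀, hE₀, x₀, fun z _ => ?_⟩
  have : z = x₀ := h z x₀
  rw [this]
  exact B.diag_mem E₀ hE₀ x₀

lemma unbounded_sub {S T : Set X} (hS : ¬ B.IsBounded S) (hT : B.IsBounded T) :
    ∃ z ∈ S, z ∉ T := by
  by_contra h
  push_neg at h
  exact hS (bounded_mono h hT)

end Part0
section Coloring

variable {α : Type u}

/-- Finite greedy colouring of finitely many fixed-point-free maps. -/
lemma finite_coloring (m K : ℕ) (hK : 2 * m < K) (f : Fin m → α → α)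
    (S : Finset α) :
    ∃ c : α → Fin K, ∀ x ∈ S, ∀ i, f i x ∈ S → f i x ≠ x → c (f i x) ≠ c x := by
  classical
  induction S using Finset.strongInduction with
  | _ S ih =>
    rcases S.eq_empty_or_nonempty with rfl | hSne
    · exact ⟨fun _ => ⟨0, by omega⟩, by simp⟩
    · -- find a vertex of small in-degree
      have hv : ∃ v ∈ S, (S.filter (fun u => ∃ i, f i u = v)).card ≤ m := by
        by_contra hcon
        push_neg at hcon
        have h1 : ∀ v ∈ S, m + 1 ≤ (S.filter (fun u => ∃ i, f i u = v)).card := by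
          intro v hv; exact hcon v hv
        have h2 : (m + 1) * S.card ≤
            ∑ v ∈ S, (S.filter (fun u => ∃ i, f i u = v)).card := by
          calc (m + 1) * S.card = ∑ _v ∈ S, (m + 1) := by
                rw [Finset.sum_const, smul_eq_mul, mul_comm]
            _ ≤ _ := Finset.sum_le_sum h1
        have h3 : ∑ v ∈ S, (S.filter (fun u => ∃ i, f i u = v)).card
            = ∑ u ∈ S, (S.filter (fun v => ∃ i, f i u = v)).card := by
          simp only [Finset.card_filter]
          rw [Finset.sum_comm]
        have h4 : ∀ u ∈ S, (S.filter (fun v => ∃ i, f i u = v)).card ≤ m := by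
          intro u _
          have hsub : S.filter (fun v => ∃ i, f i u = v) ⊆
              (Finset.univ : Finset (Fin m)).image (fun i => f i u) := by
            intro v hv
            rw [Finset.mem_filter] at hv
            obtain ⟨i, hi⟩ := hv.2
            exact Finset.mem_image.mpr ⟨i, Finset.mem_univ i, hi⟩
          calc (S.filter (fun v => ∃ i, f i u = v)).card
              ≤ ((Finset.univ : Finset (Fin m)).image (fun i => f i u)).card :=
                Finset.card_le_card hsub
            _ ≤ (Finset.univ : Finset (Fin m)).card := Finset.card_image_le
            _ = m := by simp
        have h5 : ∑ u ∈ S, (S.filter (fun v => ∃ i, f i u = v)).card ≤ m * S.card := by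
          calc ∑ u ∈ S, (S.filter (fun v => ∃ i, f i u = v)).card
              ≤ ∑ _u ∈ S, m := Finset.sum_le_sum h4
            _ = m * S.card := by rw [Finset.sum_const, smul_eq_mul, mul_comm]
        have hcard : 0 < S.card := Finset.card_pos.mpr hSne
        have h6 : (m + 1) * S.card ≤ m * S.card := h2.trans (h3 ▸ h5)
        have h7 : m + 1 ≤ m := Nat.le_of_mul_le_mul_right h6 hcard
        omega
      obtain ⟨v, hvS, hvdeg⟩ := hv
      obtain ⟨c', hc'⟩ := ih (S.erase v) (Finset.erase_ssubset hvS)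
      -- forbidden colours for v
      set Fb : Finset (Fin K) :=
        (((Finset.univ : Finset (Fin m)).filter (fun i => f i v ∈ S.erase v)).image
          (fun i => c' (f i v))) ∪
        (((S.erase v).filter (fun u => ∃ i, f i u = v)).image c') with hFb
      have hFbcard : Fb.card ≤ 2 * m := by
        have h1 : (((Finset.univ : Finset (Fin m)).filter
            (fun i => f i v ∈ S.erase v)).image (fun i => c' (f i v))).card ≤ m := by
          calc _ ≤ ((Finset.univ : Finset (Fin m)).filter
                (fun i => f i v ∈ S.erase v)).card := Finset.card_image_le
            _ ≤ (Finset.univ : Finset (Fin m)).card := Finset.card_filter_le _ _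
            _ = m := by simp
        have h2 : (((S.erase v).filter (fun u => ∃ i, f i u = v)).image c').card ≤ m := by
          calc _ ≤ ((S.erase v).filter (fun u => ∃ i, f i u = v)).card :=
                Finset.card_image_le
            _ ≤ (S.filter (fun u => ∃ i, f i u = v)).card := by
                apply Finset.card_le_card
                intro u hu
                rw [Finset.mem_filter] at hu ⊢
                exact ⟨Finset.mem_of_mem_erase hu.1, hu.2⟩
            _ ≤ m := hvdeg
        calc Fb.card ≤ _ + _ := Finset.card_union_le _ _
          _ ≤ 2 * m := by omega
      have hex : ∃ k : Fin K, k ∉ Fb := by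
        by_contra hcon
        push_neg at hcon
        have : (Finset.univ : Finset (Fin K)) ⊆ Fb := fun k _ => hcon k
        have := Finset.card_le_card this
        simp only [Finset.card_univ, Fintype.card_fin] at this
        omega
      obtain ⟨k, hk⟩ := hex
      refine ⟨Function.update c' v k, ?_⟩
      intro x hx i hfix hne
      by_cases hxv : x = v
      · subst hxv
        have hfv : f i x ≠ x := hne
        have hfS' : f i x ∈ S.erase x := Finset.mem_erase.mpr ⟨hfv, hfix⟩
        rw [Function.update_self]
        rw [Function.update_of_ne hfv]
        intro heq
        apply hk
        rw [hFb]
        apply Finset.mem_union_left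
        apply Finset.mem_image.mpr
        exact ⟨i, Finset.mem_filter.mpr ⟨Finset.mem_univ i, hfS'⟩, heq⟩
      · by_cases hfxv : f i x = v
        · rw [hfxv, Function.update_self, Function.update_of_ne hxv]
          intro heq
          apply hk
          rw [hFb]
          apply Finset.mem_union_right
          apply Finset.mem_image.mpr
          refine ⟨x, Finset.mem_filter.mpr ⟨Finset.mem_erase.mpr ⟨hxv, hx⟩, ⟨i, hfxv⟩⟩, heq.symm⟩
        · rw [Function.update_of_ne hfxv, Function.update_of_ne hxv]
          exact hc' x (Finset.mem_erase.mpr ⟨hxv, hx⟩) i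
            (Finset.mem_erase.mpr ⟨hfxv, hfix⟩) hne

/-- Global colouring of finitely many fixed-point-free maps, by compactness. -/
lemma exists_coloring (m K : ℕ) (hK : 2 * m < K) (f : Fin m → α → α)
    (hf : ∀ i x, f i x ≠ x) : ∃ c : α → Fin K, ∀ x i, c (f i x) ≠ c x := by
  classical
  have hfin := finite_coloring (α := α) m K hK f
  choose cS hcS using hfin
  haveI : Nonempty (Finset α) := ⟨∅⟩
  let 𝒱 : Ultrafilter (Finset α) := Ultrafilter.of Filter.atTop
  have h𝒱 : (↑𝒱 : Filter (Finset α)) ≤ Filter.atTop := Ultrafilter.of_le _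
  have hex : ∀ x : α, ∃ k : Fin K, {S | cS S x = k} ∈ 𝒱 := by
    intro x
    by_contra h
    push_neg at h
    have hc : ∀ k : Fin K, {S | cS S x = k}ᶜ ∈ 𝒱 := fun k =>
      (Ultrafilter.compl_mem_iff_notMem).mpr (h k)
    have h2 : (⋂ k : Fin K, {S | cS S x = k}ᶜ) ∈ 𝒱 :=
      (Filter.iInter_mem).mpr hc
    obtain ⟨S, hS⟩ := Filter.nonempty_of_mem h2
    exact (Set.mem_iInter.mp hS (cS S x)) rfl
  choose c hc using hex
  refine ⟨c, fun x i => ?_⟩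
  have h1 : {S | cS S x = c x} ∈ 𝒱 := hc x
  have h2 : {S | cS S (f i x) = c (f i x)} ∈ 𝒱 := hc (f i x)
  have h3 : {S : Finset α | ({x, f i x} : Finset α) ≤ S} ∈ 𝒱 :=
    h𝒱 (Filter.mem_atTop _)
  obtain ⟨S, hS⟩ := Filter.nonempty_of_mem
    (Filter.inter_mem (Filter.inter_mem h1 h2) h3)
  obtain ⟨⟨hS1, hS2⟩, hS3⟩ := hS
  have hxS : x ∈ S := hS3 (Finset.mem_insert_self _ _)
  have hfxS : f i x ∈ S := hS3 (Finset.mem_insert_of_mem (Finset.mem_singleton_self _))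
  have := hcS S x hxS i hfxS (hf i x)
  rw [hS1, hS2] at this
  exact this

end Coloring
section Core

noncomputable def oseq {γ : Type u} (step : Set γ → γ × γ) : Ordinal.{u} → γ × γ :=
  Ordinal.lt_wf.fix
    (fun o IH => step {z | ∃ β, ∃ h : β < o, z = (IH β h).1 ∨ z = (IH β h).2})

def oZ {γ : Type u} (step : Set γ → γ × γ) (o : Ordinal.{u}) : Set γ :=
  {z | ∃ β, ∃ _h : β < o, z = (oseq step β).1 ∨ z = (oseq step β).2}

lemma oseq_eq {γ : Type u} (step : Set γ → γ × γ) (o : Ordinal.{u}) :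
    oseq step o = step (oZ step o) := by
  rw [oseq, WellFounded.fix_eq]
  rfl

lemma part1_core {α : Type u} (I : Set α → Prop)
    (Imono : ∀ {S T : Set α}, S ⊆ T → I T → I S)
    (Iunion : ∀ {S T : Set α}, I S → I T → I (S ∪ T))
    (Iins : ∀ (a : α) {S : Set α}, I S → I (insert a S))
    (Iempty : I ∅)
    (InotX : ¬ I Set.univ)
    (Imax : ∀ S : Set α, I S ∨ I Sᶜ)
    (U V : Set (α × α))
    (hU : ∀ T : Set α, I T → I {y | ∃ x ∈ T, (x, y) ∉ U})
    (hV : ∀ T : Set α, I T → I {x | ∃ y ∈ T, (x, y) ∉ V})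
    (hdisj : ∀ p : α × α, p ∈ U → p ∉ V) : False := by
  classical
  have hne : Nonempty α := by
    by_contra h
    rw [not_nonempty_iff] at h
    have : (Set.univ : Set α) = ∅ := Set.univ_eq_empty_iff.mpr h
    exact InotX (this ▸ Iempty)
  obtain ⟨a₀⟩ := hne
  have pick : ∀ S : Set α, I S → ∃ z, z ∉ S := by
    intro S hS
    by_contra h
    push_neg at h
    exact InotX (Imono (fun x _ => h x) hS)
  have hstep : ∀ Z : Set α, ∃ p : α × α, I Z →
      (p.1 ∉ Z ∧ p.2 ∉ Z ∧ p.2 ≠ p.1 ∧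
        (∀ y ∈ Z, (p.1, y) ∈ V) ∧
        (∀ x' ∈ insert p.1 Z, (x', p.2) ∈ U)) := by
    intro Z
    by_cases hZ : I Z
    · obtain ⟨x, hx⟩ := pick _ (Iunion hZ (hV Z hZ))
      obtain ⟨y, hy⟩ := pick _ (Iins x (Iunion hZ (hU (insert x Z) (Iins x hZ))))
      refine ⟨(x, y), fun _ => ⟨?_, ?_, ?_, ?_, ?_⟩⟩
      · exact fun h => hx (Or.inl h)
      · intro h; exact hy (Set.mem_insert_iff.mpr (Or.inr (Or.inl h)))
      · intro h; exact hy (Set.mem_insert_iff.mpr (Or.inl h))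
      · intro y' hy'; by_contra hc; exact hx (Or.inr ⟨y', hy', hc⟩)
      · intro x' hx'; by_contra hc
        exact hy (Set.mem_insert_iff.mpr (Or.inr (Or.inr ⟨x', hx', hc⟩)))
    · exact ⟨(a₀, a₀), fun h => absurd h hZ⟩
  choose step hstepspec using hstep
  have hprop0 : ∀ o : Ordinal.{u}, I (oZ step o) →
      ((oseq step o).1 ∉ oZ step o ∧ (oseq step o).2 ∉ oZ step o ∧
        (oseq step o).2 ≠ (oseq step o).1 ∧
        (∀ y ∈ oZ step o, ((oseq step o).1, y) ∈ V) ∧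
        (∀ x' ∈ insert (oseq step o).1 (oZ step o), (x', (oseq step o).2) ∈ U)) := by
    intro o ho
    have := hstepspec (oZ step o) ho
    rwa [← oseq_eq step o] at this
  have hallI : ¬ ∀ o : Ordinal.{u}, I (oZ step o) := by
    intro hall
    have hinj : ∀ a b : Ordinal.{u}, a < b → (oseq step a).1 ≠ (oseq step b).1 := by
      intro a b hab heq
      exact (hprop0 b (hall b)).1 ⟨a, hab, Or.inl heq.symm⟩
    have hg : ∀ o : Ordinal.{u}, ∃ z : α,
        (if h : ∃ o', (oseq step o').1 = z then h.choose else 0) = o := by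
      intro o
      refine ⟨(oseq step o).1, ?_⟩
      have hex : ∃ o', (oseq step o').1 = (oseq step o).1 := ⟨o, rfl⟩
      rw [dif_pos hex]
      rcases lt_trichotomy hex.choose o with h | h | h
      · exact absurd hex.choose_spec (hinj _ _ h)
      · exact h
      · exact absurd hex.choose_spec.symm (hinj _ _ h)
    set g : α → Ordinal.{u} :=
      fun z => if h : ∃ o', (oseq step o').1 = z then h.choose else 0 with hgdef
    obtain ⟨z, hz⟩ := hg (Ordinal.lsub g)
    have h2 : g z = Ordinal.lsub g := hz
    have h3 := Ordinal.lt_lsub g z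
    rw [h2] at h3
    exact lt_irrefl _ h3
  obtain ⟨lam0, hlam0⟩ := not_forall.mp hallI
  set lam := Ordinal.lt_wf.min {o : Ordinal.{u} | ¬ I (oZ step o)} ⟨lam0, hlam0⟩ with hlamdef
  have hlam : ¬ I (oZ step lam) :=
    Ordinal.lt_wf.min_mem {o : Ordinal.{u} | ¬ I (oZ step o)} ⟨lam0, hlam0⟩
  have hlt : ∀ β < lam, I (oZ step β) := by
    intro β hβ
    by_contra hc
    exact Ordinal.lt_wf.not_lt_min {o : Ordinal.{u} | ¬ I (oZ step o)} hc hβ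
  have hprop : ∀ β < lam,
      ((oseq step β).1 ∉ oZ step β ∧ (oseq step β).2 ∉ oZ step β ∧
        (oseq step β).2 ≠ (oseq step β).1 ∧
        (∀ y ∈ oZ step β, ((oseq step β).1, y) ∈ V) ∧
        (∀ x' ∈ insert (oseq step β).1 (oZ step β), (x', (oseq step β).2) ∈ U)) :=
    fun β hβ => hprop0 β (hlt β hβ)
  have hmem_early : ∀ z ∈ oZ step lam, ∃ γ < lam, z ∈ oZ step γ := by
    rintro z ⟨β, hβ, hz⟩
    refine ⟨Order.succ β, ?_, ⟨β, Order.lt_succ β, hz⟩⟩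
    rcases lt_or_ge (Order.succ β) lam with h | h
    · exact h
    · exfalso
      apply hlam
      have heq : lam = Order.succ β := le_antisymm h (Order.succ_le_of_lt hβ)
      have hsub : oZ step lam ⊆
          insert (oseq step β).1 (insert (oseq step β).2 (oZ step β)) := by
        rintro z' ⟨β', hβ', hz'⟩
        rw [heq] at hβ'
        rcases lt_or_eq_of_le (Order.lt_succ_iff.mp hβ') with h' | h'
        · exact Set.mem_insert_iff.mpr (Or.inr (Set.mem_insert_iff.mpr
            (Or.inr ⟨β', h', hz'⟩)))
        · subst h'
          rcases hz' with h'' | h''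
          · exact Set.mem_insert_iff.mpr (Or.inl h'')
          · exact Set.mem_insert_iff.mpr (Or.inr (Set.mem_insert_iff.mpr (Or.inl h'')))
      exact Imono hsub (Iins _ (Iins _ (hlt β hβ)))
  set XZ : Set α := {z | ∃ β < lam, z = (oseq step β).1} with hXZdef
  set YZ : Set α := {z | ∃ β < lam, z = (oseq step β).2} with hYZdef
  have hXY : ∀ z, z ∈ XZ → z ∈ YZ → False := by
    rintro z ⟨β, hβ, rfl⟩ ⟨γ, hγ, hzy⟩
    rcases lt_trichotomy β γ with h | h | h
    · exact (hprop γ hγ).2.1 (hzy ▸ ⟨β, h, Or.inl rfl⟩)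
    · subst h
      exact (hprop β hβ).2.2.1 hzy.symm
    · exact (hprop β hβ).1 (hzy ▸ ⟨γ, h, Or.inr rfl⟩)
  rcases Imax XZ with hXZ | hXZc
  · have hbad : I {y | ∃ x ∈ XZ, (x, y) ∉ U} := hU XZ hXZ
    obtain ⟨ys, hysZ, hysgood⟩ : ∃ z ∈ oZ step lam, z ∉ {y | ∃ x ∈ XZ, (x, y) ∉ U} := by
      by_contra h
      push_neg at h
      exact hlam (Imono h hbad)
    obtain ⟨γ, hγ, hysγ⟩ := hmem_early ys hysZ
    have hV1 : ((oseq step γ).1, ys) ∈ V := (hprop γ hγ).2.2.2.1 ys hysγ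
    have hU1 : ((oseq step γ).1, ys) ∈ U := by
      by_contra hc
      exact hysgood ⟨(oseq step γ).1, ⟨γ, hγ, rfl⟩, hc⟩
    exact hdisj _ hU1 hV1
  · have hYZ : I YZ := Imono (fun z hz hx => hXY z hx hz) hXZc
    have hbad : I {x | ∃ y ∈ YZ, (x, y) ∉ V} := hV YZ hYZ
    obtain ⟨xs, hxsZ, hxsgood⟩ : ∃ z ∈ oZ step lam, z ∉ {x | ∃ y ∈ YZ, (x, y) ∉ V} := by
      by_contra h
      push_neg at h
      exact hlam (Imono h hbad)
    obtain ⟨γ, hγ, hxsγ⟩ := hmem_early xs hxsZ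
    have hU1 : (xs, (oseq step γ).2) ∈ U :=
      (hprop γ hγ).2.2.2.2 xs (Set.mem_insert_iff.mpr (Or.inr hxsγ))
    have hV1 : (xs, (oseq step γ).2) ∈ V := by
      by_contra hc
      exact hxsgood ⟨(oseq step γ).2, ⟨γ, hγ, rfl⟩, hc⟩
    exact hdisj _ hU1 hV1

end Core
section Part1

open Ballean

variable {X : Type u} {B : Ballean X}

lemma power_not_normal (hdis : B.Discrete) (hun : B.Ultranormal)
    {n : ℕ} (hn : 2 ≤ n)
    (P : Ballean (Fin n → X)) (hP : P.entourages = powEnt B n) : ¬ P.Normal := by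
  classical
  obtain ⟨E₀, hE₀, x₀, -⟩ := exists_ent_pt hdis hun
  intro hN
  set i0 : Fin n := ⟨0, by omega⟩ with hi0def
  set i1 : Fin n := ⟨1, by omega⟩ with hi1def
  have h01 : i0 ≠ i1 := by
    intro h
    rw [hi0def, hi1def, Fin.mk.injEq] at h
    omega
  set c := x₀ with hcdef
  set A : Set (Fin n → X) := {f | ∀ i, i ≠ i1 → f i = c} with hAdef
  set C : Set (Fin n → X) := {f | ∀ i, i ≠ i0 → f i = c} with hCdef
  have hAD : P.AsympDisjoint A C := by
    intro Eh hEh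
    rw [hP] at hEh
    obtain ⟨F, hF, rfl⟩ := hEh
    refine ⟨_, by rw [hP]; exact ⟨F, hF, rfl⟩, fun _ => c, ?_⟩
    rintro z ⟨⟨a, ha, haz⟩, ⟨b, hb, hbz⟩⟩
    have hz : ∀ i, (c, z i) ∈ F i := by
      intro i
      by_cases hi : i = i1
      · subst hi
        have h2 : (b i1, z i1) ∈ F i1 := hbz i1
        rw [hb i1 (fun h => h01 h.symm)] at h2
        exact h2
      · have h2 : (a i, z i) ∈ F i := haz i
        rw [ha i hi] at h2
        exact h2
    exact hz
  obtain ⟨U, V, hU, hV, hdisj⟩ := hN A C hAD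
  set ι : X → X → (Fin n → X) :=
    fun x y i => if i = i0 then x else if i = i1 then y else c with hιdef
  have hι0 : ∀ x y, ι x y i0 = x := by intro x y; simp [hιdef]
  have hι1 : ∀ x y, ι x y i1 = y := by
    intro x y; simp [hιdef, if_neg (Ne.symm h01)]
  have hιo : ∀ x y i, i ≠ i0 → i ≠ i1 → ι x y i = c := by
    intro x y i h0 h1; simp [hιdef, h0, h1]
  set U₂ : Set (X × X) := {p | ι p.1 p.2 ∈ U} with hU₂def
  set V₂ : Set (X × X) := {p | ι p.1 p.2 ∈ V} with hV₂def
  refine part1_core B.IsBounded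
    (@fun S T hST hT => bounded_mono hST hT)
    (@fun S T hS hT => bounded_union hS hT)
    (@fun a S hS => bounded_insert a hS hE₀)
    (bounded_empty hE₀ x₀) hdis.1 (bounded_or hdis hun) U₂ V₂ ?_ ?_ ?_
  · -- hU side
    intro T hT
    obtain ⟨D, hD, hDsq⟩ := exists_square (bounded_insert c hT hE₀)
    set Eh : Set ((Fin n → X) × (Fin n → X)) := {p | ∀ i, (p.1 i, p.2 i) ∈ D} with hEhdef
    have hEh : Eh ∈ P.entourages := by
      rw [hP]; exact ⟨fun _ => D, fun _ => hD, rfl⟩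
    obtain ⟨Eh', hEh', g₀, hb⟩ := hU Eh hEh
    rw [hP] at hEh'
    obtain ⟨F', hF', rfl⟩ := hEh'
    apply bounded_mono ?_ (⟨F' i1, hF' i1, g₀ i1, subset_rfl⟩ : B.IsBounded (ball (F' i1) (g₀ i1)))
    rintro y ⟨x, hxT, hxyU⟩
    have hmem : ι x y ∈ Ballean.img Eh A \ U := by
      constructor
      · refine ⟨fun i => if i = i1 then y else c, fun i hi => if_neg hi, ?_⟩
        intro i
        show ((if i = i1 then y else c), ι x y i) ∈ D
        by_cases h0 : i = i0
        · subst h0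
          rw [if_neg h01, hι0]
          exact hDsq c (Set.mem_insert c T) x (Set.mem_insert_of_mem c hxT)
        · by_cases h1 : i = i1
          · subst h1
            rw [if_pos rfl, hι1]
            exact B.diag_mem D hD y
          · rw [if_neg h1, hιo x y i h0 h1]
            exact B.diag_mem D hD c
      · exact hxyU
    have h2 : (g₀ i1, ι x y i1) ∈ F' i1 := hb hmem i1
    rw [hι1] at h2
    exact h2
  · -- hV side
    intro T hT
    obtain ⟨D, hD, hDsq⟩ := exists_square (bounded_insert c hT hE₀)
    set Eh : Set ((Fin n → X) × (Fin n → X)) := {p | ∀ i, (p.1 i, p.2 i) ∈ D} with hEhdef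
    have hEh : Eh ∈ P.entourages := by
      rw [hP]; exact ⟨fun _ => D, fun _ => hD, rfl⟩
    obtain ⟨Eh', hEh', g₀, hb⟩ := hV Eh hEh
    rw [hP] at hEh'
    obtain ⟨F', hF', rfl⟩ := hEh'
    apply bounded_mono ?_ (⟨F' i0, hF' i0, g₀ i0, subset_rfl⟩ : B.IsBounded (ball (F' i0) (g₀ i0)))
    rintro x ⟨y, hyT, hxyV⟩
    have hmem : ι x y ∈ Ballean.img Eh C \ V := by
      constructor
      · refine ⟨fun i => if i = i0 then x else c, fun i hi => if_neg hi, ?_⟩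
        intro i
        show ((if i = i0 then x else c), ι x y i) ∈ D
        by_cases h0 : i = i0
        · subst h0
          rw [if_pos rfl, hι0]
          exact B.diag_mem D hD x
        · by_cases h1 : i = i1
          · subst h1
            rw [if_neg (Ne.symm h01), hι1]
            exact hDsq c (Set.mem_insert c T) y (Set.mem_insert_of_mem c hyT)
          · rw [if_neg h0, hιo x y i h0 h1]
            exact B.diag_mem D hD c
      · exact hxyV
    have h2 : (g₀ i0, ι x y i0) ∈ F' i0 := hb hmem i0
    rw [hι0] at h2
    exact h2
  · -- disjointness
    intro p hpU hpV
    exact Set.disjoint_left.mp hdisj hpU hpV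

end Part1
section Part2a

open Ballean

variable {X : Type u} {B : Ballean X} {n : ℕ}

lemma hyper_finite (A : HyperLE X n) : A.1.Finite :=
  Cardinal.lt_aleph0_iff_set_finite.mp (lt_of_le_of_lt A.2.2 (Cardinal.nat_lt_aleph0 n))

lemma hyper_ent_mk {H : Ballean (HyperLE X n)} (hH : H.entourages = hyperEnt B n)
    {E : Set (X × X)} (hE : E ∈ B.entourages) :
    {p : HyperLE X n × HyperLE X n |
      p.1.1 ⊆ Ballean.img E p.2.1 ∧ p.2.1 ⊆ Ballean.img E p.1.1} ∈ H.entourages := by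
  rw [hH]
  exact ⟨E, hE, rfl⟩

lemma hyper_bounded_of_subset (hdis : B.Discrete) (hun : B.Ultranormal) (hn : 2 ≤ n)
    {H : Ballean (HyperLE X n)} (hH : H.entourages = hyperEnt B n)
    {𝒟 : Set (HyperLE X n)} {T : Set X} (hT : B.IsBounded T)
    (hsub : ∀ D ∈ 𝒟, D.1 ⊆ T) : H.IsBounded 𝒟 := by
  classical
  obtain ⟨E₀, hE₀, x₀, -⟩ := exists_ent_pt hdis hun
  obtain ⟨D, hD, hDsq⟩ := exists_square (bounded_insert x₀ hT hE₀)
  have hcard : Cardinal.mk ↥({x₀} : Set X) ≤ (n : Cardinal.{u}) := by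
    rw [Cardinal.mk_singleton]
    have h0 : 1 ≤ n := by omega
    have h1 : ((1 : ℕ) : Cardinal.{u}) ≤ ((n : ℕ) : Cardinal.{u}) := Nat.cast_le.mpr h0
    simpa using h1
  set A₀ : HyperLE X n := ⟨{x₀}, ⟨x₀, rfl⟩, hcard⟩ with hA₀
  refine ⟨_, hyper_ent_mk hH hD, A₀, ?_⟩
  intro Bl hBl
  constructor
  · intro z hz
    rw [hA₀] at hz
    obtain ⟨b, hb⟩ := Bl.2.1
    refine ⟨b, hb, ?_⟩
    have hzx : z = x₀ := hz
    rw [hzx]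
    exact hDsq b (Set.mem_insert_of_mem x₀ (hsub Bl hBl hb)) x₀ (Set.mem_insert x₀ T)
  · intro b hb
    refine ⟨x₀, rfl, ?_⟩
    exact hDsq x₀ (Set.mem_insert x₀ T) b (Set.mem_insert_of_mem x₀ (hsub Bl hBl hb))

lemma hyper_bounded_union (hdis : B.Discrete) (hun : B.Ultranormal)
    {H : Ballean (HyperLE X n)} (hH : H.entourages = hyperEnt B n)
    {𝒟 : Set (HyperLE X n)} (hb : H.IsBounded 𝒟) :
    ∃ T, B.IsBounded T ∧ ∀ D ∈ 𝒟, D.1 ⊆ T := by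
  obtain ⟨E₀, hE₀, x₀, -⟩ := exists_ent_pt hdis hun
  obtain ⟨Eh, hEh, A₀, hball⟩ := hb
  rw [hH] at hEh
  obtain ⟨E, hE, rfl⟩ := hEh
  refine ⟨Ballean.img E A₀.1, bounded_img hE (bounded_finite hE₀ x₀ (hyper_finite A₀)), ?_⟩
  intro D hD
  exact (hball hD).2

lemma asymp_symm {Y : Type v} {B' : Ballean Y} {A C : Set Y}
    (h : B'.AsympDisjoint A C) : B'.AsympDisjoint C A := by
  intro E hE
  rw [Set.inter_comm]
  exact h E hE

/-- The attachment relation: `Bl` is in the family or is nontrivially close to a member. -/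
def att (B : Ballean X) (𝒟 : Set (HyperLE X n)) (Bl : HyperLE X n) : Prop :=
  Bl ∈ 𝒟 ∨ ∃ A ∈ 𝒟, ∃ T : Set X, B.IsBounded T ∧ A.1 \ T = Bl.1 \ T ∧
    (Bl.1 \ T).Nonempty ∧ (A.1 ∩ T).Nonempty ∧ (Bl.1 ∩ T).Nonempty

/-- The set of points lying in a non-singleton member of the family. -/
def Wpts (𝒟 : Set (HyperLE X n)) : Set X :=
  {z | ∃ A ∈ 𝒟, z ∈ A.1 ∧ ∃ w ∈ A.1, w ≠ z}

lemma img_struct (hdis : B.Discrete) {E : Set (X × X)} (hE : E ∈ B.entourages) :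
    ∃ T₁ : Set X, B.IsBounded T₁ ∧
      ∀ (A Bl : HyperLE X n),
        A.1 ⊆ Ballean.img E Bl.1 → Bl.1 ⊆ Ballean.img E A.1 →
        (Bl.1 ⊆ T₁) ∨ (A = Bl) ∨
        (A.1 \ T₁ = Bl.1 \ T₁ ∧ (Bl.1 \ T₁).Nonempty ∧
          (A.1 ∩ T₁).Nonempty ∧ (Bl.1 ∩ T₁).Nonempty) := by
  obtain ⟨S, hS, hball⟩ := hdis.2 E hE
  refine ⟨S ∪ Ballean.img E S, bounded_union hS (bounded_img hE hS), ?_⟩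
  intro A Bl hAB hBA
  set T₁ : Set X := S ∪ Ballean.img E S with hT₁
  have hres : A.1 \ T₁ = Bl.1 \ T₁ := by
    apply Set.Subset.antisymm
    · rintro a ⟨haA, haT⟩
      obtain ⟨b, hb, hba⟩ := hAB haA
      by_cases hbS : b ∈ S
      · exact absurd (Or.inr ⟨b, hbS, hba⟩) haT
      · have h2 : a ∈ Ballean.ball E b := hba
        rw [hball b hbS] at h2
        rw [Set.mem_singleton_iff] at h2
        subst h2
        exact ⟨hb, haT⟩
    · rintro b ⟨hbB, hbT⟩
      obtain ⟨a, ha, hab⟩ := hBA hbB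
      by_cases haS : a ∈ S
      · exact absurd (Or.inr ⟨a, haS, hab⟩) hbT
      · have h2 : b ∈ Ballean.ball E a := hab
        rw [hball a haS] at h2
        rw [Set.mem_singleton_iff] at h2
        subst h2
        exact ⟨ha, hbT⟩
  have hsync1 : (Bl.1 ∩ T₁).Nonempty → (A.1 ∩ T₁).Nonempty := by
    rintro ⟨b, hbB, hbT⟩
    obtain ⟨a, ha, hab⟩ := hBA hbB
    by_cases haS : a ∈ S
    · exact ⟨a, ha, Or.inl haS⟩
    · have h2 : b ∈ Ballean.ball E a := hab
      rw [hball a haS] at h2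
      rw [Set.mem_singleton_iff] at h2
      exact ⟨a, ha, h2 ▸ hbT⟩
  have hsync2 : (A.1 ∩ T₁).Nonempty → (Bl.1 ∩ T₁).Nonempty := by
    rintro ⟨a, haA, haT⟩
    obtain ⟨b, hb, hba⟩ := hAB haA
    by_cases hbS : b ∈ S
    · exact ⟨b, hb, Or.inl hbS⟩
    · have h2 : a ∈ Ballean.ball E b := hba
      rw [hball b hbS] at h2
      rw [Set.mem_singleton_iff] at h2
      exact ⟨b, hb, h2 ▸ haT⟩
  by_cases hr : (Bl.1 \ T₁).Nonempty
  · by_cases hm : (Bl.1 ∩ T₁).Nonempty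
    · exact Or.inr (Or.inr ⟨hres, hr, hsync1 hm, hm⟩)
    · right; left
      apply Subtype.ext
      apply Set.Subset.antisymm
      · intro z hz
        have hzT : z ∉ T₁ := by
          intro hzT
          exact hm (hsync2 ⟨z, hz, hzT⟩)
        have : z ∈ A.1 \ T₁ := ⟨hz, hzT⟩
        rw [hres] at this
        exact this.1
      · intro z hz
        have hzT : z ∉ T₁ := fun hzT => hm ⟨z, hz, hzT⟩
        have : z ∈ Bl.1 \ T₁ := ⟨hz, hzT⟩
        rw [← hres] at this
        exact this.1
  · left
    intro z hz
    by_contra hzT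
    exact hr ⟨z, hz, hzT⟩

lemma bounded_biUnion {ι : Type v} (hE₀ : E₀ ∈ B.entourages) (x₀ : X)
    (s : Finset ι) (f : ι → Set X) (hf : ∀ i ∈ s, B.IsBounded (f i)) :
    B.IsBounded (⋃ i ∈ s, f i) := by
  classical
  induction s using Finset.induction_on with
  | empty => simpa using bounded_empty hE₀ x₀
  | insert a s hx ih =>
    rw [Finset.set_biUnion_insert]
    refine bounded_union (hf _ (Finset.mem_insert_self _ _)) (ih ?_)
    intro i hi
    exact hf i (Finset.mem_insert_of_mem hi)

lemma exists_enum {m : ℕ} {P : Set X} (hfin : P.Finite)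
    (hcard : Cardinal.mk ↥P ≤ (m : Cardinal.{u}))
    {x y₀ y₁ : X} (hx : x ∉ P) (hne : y₀ ≠ y₁) :
    ∃ g : Fin m → X, (∀ i, g i ≠ x) ∧ P ⊆ Set.range g := by
  classical
  set l := hfin.toFinset.toList with hl
  have hlen : l.length ≤ m := by
    rw [hl, Finset.length_toList]
    have h1 : (Cardinal.mk ↥P) = (hfin.toFinset.card : Cardinal) := by
      rw [← Cardinal.mk_coe_finset]
      congr 1
      simp [Set.Finite.coe_toFinset]
    rw [h1] at hcard
    exact_mod_cast hcard
  set pad : X := if x = y₀ then y₁ else y₀ with hpad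
  have hpadne : pad ≠ x := by
    by_cases h : x = y₀
    · rw [hpad, if_pos h, h]
      exact hne.symm
    · rw [hpad, if_neg h]
      exact fun hh => h hh.symm
  refine ⟨fun i => if h : (i : ℕ) < l.length then l.get ⟨i, h⟩ else pad, ?_, ?_⟩
  · intro i
    show (if h : ((i : ℕ)) < l.length then l.get ⟨(i : ℕ), h⟩ else pad) ≠ x
    by_cases h : (i : ℕ) < l.length
    · rw [dif_pos h]
      intro heq
      apply hx
      have hmem : l.get ⟨(i : ℕ), h⟩ ∈ l := List.get_mem l ⟨(i : ℕ), h⟩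
      rw [heq] at hmem
      rw [hl, Finset.mem_toList] at hmem
      exact (Set.Finite.mem_toFinset hfin).mp hmem
    · rw [dif_neg h]
      exact hpadne
  · intro p hp
    have hpl : p ∈ l := by
      rw [hl, Finset.mem_toList]
      exact (Set.Finite.mem_toFinset hfin).mpr hp
    obtain ⟨j, hj⟩ := List.mem_iff_get.mp hpl
    refine ⟨⟨(j : ℕ), lt_of_lt_of_le j.2 hlen⟩, ?_⟩
    show (if h : ((j : ℕ)) < l.length then l.get ⟨(j : ℕ), h⟩ else pad) = p
    rw [dif_pos j.2]
    exact hj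

end Part2a
section Part2b

open Ballean

variable {X : Type u} {B : Ballean X} {n : ℕ}

lemma ne_singleton_elim {S : Set X} {x : X} (hx : x ∈ S) (hne : S ≠ {x}) :
    ∃ z ∈ S, z ≠ x := by
  by_contra h
  push_neg at h
  apply hne
  apply Set.Subset.antisymm
  · intro z hz
    exact h z hz
  · intro z hz
    rw [Set.mem_singleton_iff] at hz
    rw [hz]
    exact hx

lemma exists_enum3 {x : X} {S1 S2 S3 : Set X}
    (hf1 : S1.Finite) (hf2 : S2.Finite) (hf3 : S3.Finite)
    (h1 : Cardinal.mk ↥S1 ≤ (n : Cardinal.{u}))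
    (h2 : Cardinal.mk ↥S2 ≤ (n : Cardinal.{u}))
    (h3 : Cardinal.mk ↥S3 ≤ (n : Cardinal.{u}))
    {y₀ y₁ : X} (hy : y₀ ≠ y₁) :
    ∃ g : Fin (3 * n) → X, (∀ i, g i ≠ x) ∧ S1 ⊆ insert x (Set.range g) ∧
      S2 ⊆ insert x (Set.range g) ∧ S3 ⊆ insert x (Set.range g) := by
  classical
  set P : Set X := (S1 ∪ S2 ∪ S3) \ {x} with hP
  have hPfin : P.Finite := (((hf1.union hf2).union hf3)).diff
  have hPcard : Cardinal.mk ↥P ≤ ((3 * n : ℕ) : Cardinal.{u}) := by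
    have hsub : Cardinal.mk ↥P ≤ Cardinal.mk ↥(S1 ∪ S2 ∪ S3) :=
      Cardinal.mk_le_mk_of_subset (Set.diff_subset)
    have hu : Cardinal.mk ↥(S1 ∪ S2 ∪ S3) ≤
        Cardinal.mk ↥S1 + Cardinal.mk ↥S2 + Cardinal.mk ↥S3 :=
      le_trans (Cardinal.mk_union_le _ _)
        (add_le_add_left (Cardinal.mk_union_le _ _) _)
    have hcast : ((3 * n : ℕ) : Cardinal.{u}) =
        ((n : ℕ) : Cardinal.{u}) + ((n : ℕ) : Cardinal.{u}) + ((n : ℕ) : Cardinal.{u}) := by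
      push_cast
      ring
    rw [hcast]
    exact le_trans hsub (le_trans hu (add_le_add (add_le_add h1 h2) h3))
  have hxP : x ∉ P := fun h => h.2 rfl
  obtain ⟨g, hg1, hg2⟩ := exists_enum hPfin hPcard hxP hy
  have hS : ∀ {S : Set X}, S ⊆ S1 ∪ S2 ∪ S3 → S ⊆ insert x (Set.range g) := by
    intro S hsub z hz
    by_cases hzx : z = x
    · exact Set.mem_insert_iff.mpr (Or.inl hzx)
    · exact Set.mem_insert_iff.mpr (Or.inr (hg2 ⟨hsub hz, hzx⟩))
  exact ⟨g, hg1, hS (fun z hz => Or.inl (Or.inl hz)),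
    hS (fun z hz => Or.inl (Or.inr hz)), hS (fun z hz => Or.inr hz)⟩

lemma ymat_bounded (hdis : B.Discrete) (hun : B.Ultranormal) (hn : 2 ≤ n)
    {H : Ballean (HyperLE X n)} (hH : H.entourages = hyperEnt B n)
    {𝒜 𝒞 : Set (HyperLE X n)} (hAD : H.AsympDisjoint 𝒜 𝒞)
    {T₁ : Set X} (hT₁ : B.IsBounded T₁) :
    ∃ Tb, B.IsBounded Tb ∧
      {x | x ∉ T₁ ∧ ∃ Bl : HyperLE X n, x ∈ Bl.1 ∧ (∃ w ∈ Bl.1, w ≠ x) ∧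
        (∃ A ∈ 𝒜, x ∈ A.1 ∧ (A = Bl ∨ (A.1 \ T₁ = Bl.1 \ T₁ ∧ (A.1 ∩ T₁).Nonempty))) ∧
        (Bl ∈ 𝒞 ∨ ∃ C ∈ 𝒞, x ∈ C.1 ∧ C.1 ≠ Bl.1 ∧ C.1 ≠ {x})} ⊆ Tb := by
  classical
  obtain ⟨E₀, hE₀, x₀, -⟩ := exists_ent_pt hdis hun
  obtain ⟨y₀, y₁, hy01⟩ := exists_two_ne hdis hE₀ x₀
  set Y : Set X :=
      {x | x ∉ T₁ ∧ ∃ Bl : HyperLE X n, x ∈ Bl.1 ∧ (∃ w ∈ Bl.1, w ≠ x) ∧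
        (∃ A ∈ 𝒜, x ∈ A.1 ∧ (A = Bl ∨ (A.1 \ T₁ = Bl.1 \ T₁ ∧ (A.1 ∩ T₁).Nonempty))) ∧
        (Bl ∈ 𝒞 ∨ ∃ C ∈ 𝒞, x ∈ C.1 ∧ C.1 ≠ Bl.1 ∧ C.1 ≠ {x})} with hYdef
  have H1 : ∀ x : X, ∃ g : Fin (3 * n) → X, (∀ i, g i ≠ x) ∧ (x ∈ Y →
      ∃ Bl : HyperLE X n, x ∈ Bl.1 ∧ Bl.1 ⊆ insert x (Set.range g) ∧
        (∃ w ∈ Bl.1, w ≠ x) ∧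
        (∃ A ∈ 𝒜, x ∈ A.1 ∧ A.1 ⊆ insert x (Set.range g) ∧
          (A = Bl ∨ (A.1 \ T₁ = Bl.1 \ T₁ ∧ (A.1 ∩ T₁).Nonempty))) ∧
        (Bl ∈ 𝒞 ∨ ∃ C ∈ 𝒞, x ∈ C.1 ∧ C.1 ⊆ insert x (Set.range g) ∧
          C.1 ≠ Bl.1 ∧ C.1 ≠ {x})) := by
    intro x
    by_cases hx : x ∈ Y
    · obtain ⟨hxT, Bl, hxBl, hw, ⟨A, hA, hxA, hAcase⟩, hC⟩ := hx
      rcases hC with hBlC | ⟨C, hC, hxC, hCne, hCns⟩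
      · obtain ⟨g, hg1, hs1, hs2, -⟩ := exists_enum3 (x := x)
          (hyper_finite Bl) (hyper_finite A) (hyper_finite Bl)
          Bl.2.2 A.2.2 Bl.2.2 hy01
        exact ⟨g, hg1, fun _ => ⟨Bl, hxBl, hs1, hw, ⟨A, hA, hxA, hs2, hAcase⟩,
          Or.inl hBlC⟩⟩
      · obtain ⟨g, hg1, hs1, hs2, hs3⟩ := exists_enum3 (x := x)
          (hyper_finite Bl) (hyper_finite A) (hyper_finite C)
          Bl.2.2 A.2.2 C.2.2 hy01
        exact ⟨g, hg1, fun _ => ⟨Bl, hxBl, hs1, hw, ⟨A, hA, hxA, hs2, hAcase⟩,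
          Or.inr ⟨C, hC, hxC, hs3, hCne, hCns⟩⟩⟩
    · refine ⟨fun _ => if x = y₀ then y₁ else y₀, ?_, fun hx' => absurd hx' hx⟩
      intro i
      by_cases h : x = y₀
      · rw [if_pos h, h]
        exact hy01.symm
      · rw [if_neg h]
        exact fun hh => h hh.symm
  choose g hg1 hg2 using H1
  obtain ⟨col, hcol⟩ := exists_coloring (3 * n) (2 * (3 * n) + 1) (by omega)
    (fun i x => g x i) (fun i x => hg1 x i)
  have hTk : ∀ k : Fin (2 * (3 * n) + 1), ∃ Tk, B.IsBounded Tk ∧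
      (Y ∩ col ⁻¹' {k}) ⊆ Tk := by
    intro k
    rcases bounded_or hdis hun (col ⁻¹' {k}) with hcb | hcb
    · exact ⟨col ⁻¹' {k}, hcb, Set.inter_subset_right⟩
    · set Ts : Set X := T₁ ∪ (col ⁻¹' {k})ᶜ with hTs
      have hTsb : B.IsBounded Ts := bounded_union hT₁ hcb
      obtain ⟨D, hD, hDsq⟩ := exists_square hTsb
      have hDmem := hyper_ent_mk (B := B) (n := n) hH hD
      obtain ⟨Tk, hTkb, hTksub⟩ := hyper_bounded_union hdis hun hH (hAD _ hDmem)
      refine ⟨Tk, hTkb, ?_⟩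
      rintro x ⟨hxY, hxk⟩
      obtain ⟨Bl, hxBl, hBlsub, hw, ⟨A, hA, hxA, hAsub, hAcase⟩, hCside⟩ := hg2 x hxY
      have hxT₁ : x ∉ T₁ := hxY.1
      have hcolx : col x = k := hxk
      have hxTs : x ∉ Ts := by
        rintro (h | h)
        · exact hxT₁ h
        · exact h hcolx
      have hrange : ∀ z ∈ Set.range (g x), z ∈ Ts := by
        rintro z ⟨i, rfl⟩
        refine Or.inr ?_
        intro hz
        have h2 : col (g x i) ≠ col x := hcol x i
        have hz' : col (g x i) = k := hz
        rw [hz', hcolx] at h2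
        exact h2 rfl
      have habs : ∀ {S : Set X}, S ⊆ insert x (Set.range (g x)) →
          ∀ z ∈ S, z ≠ x → z ∈ Ts := by
        intro S hsub z hz hzx
        rcases Set.mem_insert_iff.mp (hsub hz) with h | h
        · exact absurd h hzx
        · exact hrange z h
      -- Bl is in the image of 𝒜
      have hmemA : Bl ∈ Ballean.img
          {p : HyperLE X n × HyperLE X n |
            p.1.1 ⊆ Ballean.img D p.2.1 ∧ p.2.1 ⊆ Ballean.img D p.1.1} 𝒜 := by
        rcases hAcase with rfl | ⟨hres, ha₀⟩
        · exact ⟨A, hA, fun z hz => ⟨z, hz, B.diag_mem D hD z⟩,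
            fun z hz => ⟨z, hz, B.diag_mem D hD z⟩⟩
        · obtain ⟨w, hwBl, hwx⟩ := hw
          obtain ⟨a₀, ha₀A, ha₀T⟩ := ha₀
          have hwTs : w ∈ Ts := habs hBlsub w hwBl hwx
          have ha₀Ts : a₀ ∈ Ts := Or.inl ha₀T
          refine ⟨A, hA, ?_, ?_⟩
          · intro a ha
            by_cases hax : a = x
            · exact ⟨x, hxBl, hax ▸ B.diag_mem D hD x⟩
            · exact ⟨w, hwBl, hDsq w hwTs a (habs hAsub a ha hax)⟩
          · intro b hb
            by_cases hbx : b = x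
            · exact ⟨x, hxA, hbx ▸ B.diag_mem D hD x⟩
            · exact ⟨a₀, ha₀A, hDsq a₀ ha₀Ts b (habs hBlsub b hb hbx)⟩
      -- Bl is in the image of 𝒞
      have hmemC : Bl ∈ Ballean.img
          {p : HyperLE X n × HyperLE X n |
            p.1.1 ⊆ Ballean.img D p.2.1 ∧ p.2.1 ⊆ Ballean.img D p.1.1} 𝒞 := by
        rcases hCside with hBlC | ⟨C, hC, hxC, hCsub, hCne, hCns⟩
        · exact ⟨Bl, hBlC, fun z hz => ⟨z, hz, B.diag_mem D hD z⟩,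
            fun z hz => ⟨z, hz, B.diag_mem D hD z⟩⟩
        · obtain ⟨w, hwBl, hwx⟩ := hw
          have hwTs : w ∈ Ts := habs hBlsub w hwBl hwx
          obtain ⟨c₀, hc₀C, hc₀x⟩ := ne_singleton_elim hxC hCns
          have hc₀Ts : c₀ ∈ Ts := habs hCsub c₀ hc₀C hc₀x
          refine ⟨C, hC, ?_, ?_⟩
          · intro cc hcc
            by_cases hccx : cc = x
            · exact ⟨x, hxBl, hccx ▸ B.diag_mem D hD x⟩
            · exact ⟨w, hwBl, hDsq w hwTs cc (habs hCsub cc hcc hccx)⟩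
          · intro b hb
            by_cases hbx : b = x
            · exact ⟨x, hxC, hbx ▸ B.diag_mem D hD x⟩
            · exact ⟨c₀, hc₀C, hDsq c₀ hc₀Ts b (habs hBlsub b hb hbx)⟩
      exact hTksub Bl ⟨hmemA, hmemC⟩ hxBl
  choose Tk hTkb hTksub using hTk
  refine ⟨⋃ k ∈ (Finset.univ : Finset (Fin (2 * (3 * n) + 1))), Tk k, ?_, ?_⟩
  · exact bounded_biUnion hE₀ x₀ _ _ (fun k _ => hTkb k)
  · intro x hx
    have h2 := hTksub (col x) ⟨hx, rfl⟩
    exact Set.mem_biUnion (Finset.mem_univ (col x)) h2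

end Part2b
section Part2c

open Ballean

variable {X : Type u} {B : Ballean X} {n : ℕ}

/-- The attachment set is always an asymptotic neighbourhood of the family. -/
lemma nbhd_att (hdis : B.Discrete) (hun : B.Ultranormal) (hn : 2 ≤ n)
    {H : Ballean (HyperLE X n)} (hH : H.entourages = hyperEnt B n)
    (𝒞 : Set (HyperLE X n)) : H.AsympNbhd 𝒞 {Bl | att B 𝒞 Bl} := by
  intro Eh hEh
  rw [hH] at hEh
  obtain ⟨E, hE, rfl⟩ := hEh
  obtain ⟨T₁, hT₁b, hstr⟩ := img_struct (n := n) hdis hE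
  apply hyper_bounded_of_subset hdis hun hn hH hT₁b
  rintro Bl ⟨⟨C, hC, hpair⟩, hnot⟩
  rcases hstr C Bl hpair.1 hpair.2 with hjunk | heq | hatt
  · exact hjunk
  · exact absurd (Or.inl (heq ▸ hC)) hnot
  · exact absurd (Or.inr ⟨C, hC, T₁, hT₁b, hatt.1, hatt.2.1, hatt.2.2.1, hatt.2.2.2⟩) hnot

lemma nbhd_caseII_U (hdis : B.Discrete) (hun : B.Ultranormal) (hn : 2 ≤ n)
    {H : Ballean (HyperLE X n)} (hH : H.entourages = hyperEnt B n)
    {𝒜 𝒞 : Set (HyperLE X n)} (hAD : H.AsympDisjoint 𝒜 𝒞)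
    (hWA : B.IsBounded (Wpts 𝒜)) :
    H.AsympNbhd 𝒜 {Bl | Bl ∈ 𝒜 ∧ ¬ att B 𝒞 Bl} := by
  classical
  intro Eh hEh
  rw [hH] at hEh
  obtain ⟨E, hE, rfl⟩ := hEh
  have hEhmem := hyper_ent_mk (B := B) (n := n) hH hE
  obtain ⟨T₁, hT₁b, hstr⟩ := img_struct (n := n) hdis hE
  obtain ⟨TJ, hTJb, hTJsub⟩ := hyper_bounded_union hdis hun hH (hAD _ hEhmem)
  apply hyper_bounded_of_subset hdis hun hn hH
    (bounded_union hT₁b (bounded_union hWA hTJb))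
  rintro Bl ⟨hmem, hnot⟩
  obtain ⟨A, hA, hpair⟩ := hmem
  rcases hstr A Bl hpair.1 hpair.2 with hjunk | heq | hatt
  · exact fun z hz => Or.inl (hjunk hz)
  · -- Bl ∈ 𝒜, and since Bl ∉ U we get att B 𝒞 Bl
    have hBlA : Bl ∈ 𝒜 := heq ▸ hA
    have hattC : att B 𝒞 Bl := by
      by_contra h
      exact hnot ⟨hBlA, h⟩
    by_cases hsing : ∃ w, Bl.1 = {w}
    · obtain ⟨w, hw⟩ := hsing
      have hBlC : Bl ∈ 𝒞 := by
        rcases hattC with h | ⟨C, hC, T, hTb, hres, hrne, haT, hbT⟩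
        · exact h
        · exfalso
          obtain ⟨r, hrB, hrT⟩ := hrne
          obtain ⟨b, hbB, hbT'⟩ := hbT
          rw [hw, Set.mem_singleton_iff] at hrB hbB
          rw [hrB] at hrT
          rw [hbB] at hbT'
          exact hrT hbT'
      have hBlmem : Bl ∈ Ballean.img
          {p : HyperLE X n × HyperLE X n |
            p.1.1 ⊆ Ballean.img E p.2.1 ∧ p.2.1 ⊆ Ballean.img E p.1.1} 𝒜 ∩
          Ballean.img {p : HyperLE X n × HyperLE X n |
            p.1.1 ⊆ Ballean.img E p.2.1 ∧ p.2.1 ⊆ Ballean.img E p.1.1} 𝒞 := by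
        constructor
        · exact ⟨Bl, hBlA, fun z hz => ⟨z, hz, B.diag_mem E hE z⟩,
            fun z hz => ⟨z, hz, B.diag_mem E hE z⟩⟩
        · exact ⟨Bl, hBlC, fun z hz => ⟨z, hz, B.diag_mem E hE z⟩,
            fun z hz => ⟨z, hz, B.diag_mem E hE z⟩⟩
      exact fun z hz => Or.inr (Or.inr (hTJsub Bl hBlmem hz))
    · push_neg at hsing
      intro z hz
      obtain ⟨w, hwB, hwz⟩ := ne_singleton_elim hz (hsing z)
      exact Or.inr (Or.inl ⟨Bl, hBlA, hz, w, hwB, hwz⟩)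
  · -- attached case: the residue sits inside a member of 𝒜 of size ≥ 2
    obtain ⟨hres, hrne, haT, hbT⟩ := hatt
    intro z hz
    by_cases hzT : z ∈ T₁
    · exact Or.inl hzT
    · have hzA : z ∈ A.1 := by
        have : z ∈ Bl.1 \ T₁ := ⟨hz, hzT⟩
        rw [← hres] at this
        exact this.1
      obtain ⟨a₀, ha₀A, ha₀T⟩ := haT
      have hne : a₀ ≠ z := fun h => hzT (h ▸ ha₀T)
      exact Or.inr (Or.inl ⟨A, hA, hzA, a₀, ha₀A, hne⟩)

lemma sep_of_W_bounded (hdis : B.Discrete) (hun : B.Ultranormal) (hn : 2 ≤ n)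
    {H : Ballean (HyperLE X n)} (hH : H.entourages = hyperEnt B n)
    {𝒜 𝒞 : Set (HyperLE X n)} (hAD : H.AsympDisjoint 𝒜 𝒞)
    (hWA : B.IsBounded (Wpts 𝒜)) :
    ∃ U V : Set (HyperLE X n),
      H.AsympNbhd 𝒜 U ∧ H.AsympNbhd 𝒞 V ∧ Disjoint U V := by
  refine ⟨{Bl | Bl ∈ 𝒜 ∧ ¬ att B 𝒞 Bl}, {Bl | att B 𝒞 Bl},
    nbhd_caseII_U hdis hun hn hH hAD hWA, nbhd_att hdis hun hn hH 𝒞, ?_⟩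
  rw [Set.disjoint_left]
  rintro Bl ⟨-, h2⟩ h3
  exact h2 h3

lemma nbhd_case3 (hdis : B.Discrete) (hun : B.Ultranormal) (hn : 2 ≤ n)
    {H : Ballean (HyperLE X n)} (hH : H.entourages = hyperEnt B n)
    {𝒜 𝒞 : Set (HyperLE X n)} (hAD : H.AsympDisjoint 𝒜 𝒞)
    (hWCc : B.IsBounded (Wpts 𝒞)ᶜ) :
    H.AsympNbhd 𝒜 {Bl | att B 𝒜 Bl ∧ ¬ att B 𝒞 Bl} := by
  classical
  intro Eh hEh
  rw [hH] at hEh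
  obtain ⟨E, hE, rfl⟩ := hEh
  have hEhmem := hyper_ent_mk (B := B) (n := n) hH hE
  obtain ⟨T₁, hT₁b, hstr⟩ := img_struct (n := n) hdis hE
  obtain ⟨TJ, hTJb, hTJsub⟩ := hyper_bounded_union hdis hun hH (hAD _ hEhmem)
  obtain ⟨Tb, hTbb, hTbsub⟩ := ymat_bounded hdis hun hn hH hAD hT₁b
  apply hyper_bounded_of_subset hdis hun hn hH
    (bounded_union hT₁b (bounded_union hTbb (bounded_union hTJb hWCc)))
  rintro Bl ⟨hmem, hnot⟩
  obtain ⟨A, hA, hpair⟩ := hmem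
  -- membership of Bl in the 𝒜-image (to be combined with 𝒞 membership if Bl ∈ 𝒞)
  have hBlimgA : Bl ∈ Ballean.img
      {p : HyperLE X n × HyperLE X n |
        p.1.1 ⊆ Ballean.img E p.2.1 ∧ p.2.1 ⊆ Ballean.img E p.1.1} 𝒜 :=
    ⟨A, hA, hpair⟩
  have hTJBl : Bl ∈ 𝒞 → Bl.1 ⊆ TJ := by
    intro hBlC
    apply hTJsub Bl
    refine ⟨hBlimgA, Bl, hBlC, fun z hz => ⟨z, hz, B.diag_mem E hE z⟩,
      fun z hz => ⟨z, hz, B.diag_mem E hE z⟩⟩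
  rcases hstr A Bl hpair.1 hpair.2 with hjunk | heq | hatt
  · exact fun z hz => Or.inl (hjunk hz)
  · have hBlA : Bl ∈ 𝒜 := heq ▸ hA
    have hattC : att B 𝒞 Bl := by
      by_contra h
      exact hnot ⟨Or.inl hBlA, h⟩
    -- if Bl ∈ 𝒞 we are done via TJ
    by_cases hBlC : Bl ∈ 𝒞
    · exact fun z hz => Or.inr (Or.inr (Or.inl (hTJBl hBlC hz)))
    by_cases hsing : ∃ w, Bl.1 = {w}
    · -- singleton with nontrivial 𝒞-attachment: impossible, so Bl ∈ 𝒞: contradiction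
      obtain ⟨w, hw⟩ := hsing
      exfalso
      rcases hattC with h | ⟨C, hC, T, hTb0, hres, hrne, haT, hbT⟩
      · exact hBlC h
      · obtain ⟨r, hrB, hrT⟩ := hrne
        obtain ⟨b, hbB, hbT'⟩ := hbT
        rw [hw, Set.mem_singleton_iff] at hrB hbB
        rw [hrB] at hrT
        rw [hbB] at hbT'
        exact hrT hbT'
    · push_neg at hsing
      intro z hz
      by_cases hzT : z ∈ T₁
      · exact Or.inl hzT
      obtain ⟨w, hwB, hwz⟩ := ne_singleton_elim hz (hsing z)
      by_cases hp : ∃ C ∈ 𝒞, z ∈ C.1 ∧ C.1 ≠ Bl.1 ∧ C.1 ≠ {z}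
      · refine Or.inr (Or.inl (hTbsub ?_))
        exact ⟨hzT, Bl, hz, ⟨w, hwB, hwz⟩, ⟨Bl, hBlA, hz, Or.inl rfl⟩, Or.inr hp⟩
      · refine Or.inr (Or.inr (Or.inr ?_))
        intro hzW
        obtain ⟨C, hC, hzC, w', hw'C, hw'z⟩ := hzW
        apply hp
        refine ⟨C, hC, hzC, ?_, ?_⟩
        · intro hCB
          exact hBlC ((Subtype.ext hCB : C = Bl) ▸ hC)
        · intro hCz
          rw [hCz, Set.mem_singleton_iff] at hw'C
          exact hw'z hw'C
  · obtain ⟨hres, hrne, haT, hbT⟩ := hatt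
    have hattA : att B 𝒜 Bl :=
      Or.inr ⟨A, hA, T₁, hT₁b, hres, hrne, haT, hbT⟩
    have hattC : att B 𝒞 Bl := by
      by_contra h
      exact hnot ⟨hattA, h⟩
    by_cases hBlC : Bl ∈ 𝒞
    · exact fun z hz => Or.inr (Or.inr (Or.inl (hTJBl hBlC hz)))
    intro z hz
    by_cases hzT : z ∈ T₁
    · exact Or.inl hzT
    have hzA : z ∈ A.1 := by
      have : z ∈ Bl.1 \ T₁ := ⟨hz, hzT⟩
      rw [← hres] at this
      exact this.1
    obtain ⟨b₀, hb₀B, hb₀T⟩ := hbT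
    have hb₀z : b₀ ≠ z := fun h => hzT (h ▸ hb₀T)
    by_cases hp : ∃ C ∈ 𝒞, z ∈ C.1 ∧ C.1 ≠ Bl.1 ∧ C.1 ≠ {z}
    · refine Or.inr (Or.inl (hTbsub ?_))
      exact ⟨hzT, Bl, hz, ⟨b₀, hb₀B, hb₀z⟩,
        ⟨A, hA, hzA, Or.inr ⟨hres, haT⟩⟩, Or.inr hp⟩
    · refine Or.inr (Or.inr (Or.inr ?_))
      intro hzW
      obtain ⟨C, hC, hzC, w', hw'C, hw'z⟩ := hzW
      apply hp
      refine ⟨C, hC, hzC, ?_, ?_⟩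
      · intro hCB
        exact hBlC ((Subtype.ext hCB : C = Bl) ▸ hC)
      · intro hCz
        rw [hCz, Set.mem_singleton_iff] at hw'C
        exact hw'z hw'C

lemma hyper_normal (hdis : B.Discrete) (hun : B.Ultranormal) (hn : 2 ≤ n)
    {H : Ballean (HyperLE X n)} (hH : H.entourages = hyperEnt B n) : H.Normal := by
  intro 𝒜 𝒞 hAD
  rcases bounded_or hdis hun (Wpts 𝒜) with hWA | hWAc
  · exact sep_of_W_bounded hdis hun hn hH hAD hWA
  · rcases bounded_or hdis hun (Wpts 𝒞) with hWC | hWCc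
    · obtain ⟨U, V, hU, hV, hdisj⟩ :=
        sep_of_W_bounded hdis hun hn hH (asymp_symm hAD) hWC
      exact ⟨V, U, hV, hU, hdisj.symm⟩
    · refine ⟨{Bl | att B 𝒜 Bl ∧ ¬ att B 𝒞 Bl}, {Bl | att B 𝒞 Bl ∧ ¬ att B 𝒜 Bl},
        nbhd_case3 hdis hun hn hH hAD hWCc,
        nbhd_case3 hdis hun hn hH (asymp_symm hAD) hWAc, ?_⟩
      rw [Set.disjoint_left]
      rintro Bl ⟨h1, h2⟩ ⟨h3, h4⟩
      exact h2 h3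

end Part2c
/-- STATEMENT 5: for an ultradiscrete ballean `X` and `n ≥ 2`, the `n`-th power `X^n`
is not normal, but the hypersymmetric `n`-th power `[X]^{≤n}` is normal. -/
theorem statement5 {X : Type u} (B : Ballean X)
    (hdis : B.Discrete) (hun : B.Ultranormal)
    {n : ℕ} (hn : 2 ≤ n)
    (P : Ballean (Fin n → X)) (hP : P.entourages = powEnt B n)
    (H : Ballean (HyperLE X n)) (hH : H.entourages = hyperEnt B n) :
    ¬ P.Normal ∧ H.Normal := by
  exact ⟨power_not_normal hdis hun hn P hP, hyper_normal hdis hun hn hH⟩
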